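/- Identify the basis e₁,e₂,e₃ of V = K^3 with the three nonzero elements of the field 𝔽₄. Let g: V → V^{⊗n} be any composition of tensor products of λ (λ(eᵢ) = eⱼ⊗eₖ + eₖ⊗eⱼ) and identity maps (a descendant binary tree operator). If the coefficient of e_{i(1)}⊗⋯⊗e_{i(n)} in g(eᵢ) is nonzero, then eᵢ = e_{i(1)} + e_{i(2)} + ⋯ + e_{i(n)} in 𝔽₄. -/

import Mathlib

noncomputable section

/-- The model of `V^{⊗ n}` as the free `K`-module on colorings `Fin n → Fin 3`
(the canonical tensor basis of `(K^3)^{⊗ n}`). -/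
abbrev W (K : Type*) [Field K] (n : ℕ) := (Fin n → Fin 3) → K

/-- Insert the pair of colors `(a, b)` at position `p`, replacing the color `c p`. -/
def ins {n : ℕ} (p : Fin n) (c : Fin n → Fin 3) (a b : Fin 3) : Fin (n + 1) → Fin 3 :=
  fun q =>
    if h1 : q.val < p.val then c ⟨q.val, by have := p.isLt; omega⟩
    else if h2 : q.val = p.val then a
    else if h3 : q.val = p.val + 1 then b
    else c ⟨q.val - 1, by have := q.isLt; omega⟩

/-- The operator `id^{⊗ p} ⊗ λ ⊗ id^{⊗ (n - 1 - p)} : V^{⊗ n} → V^{⊗ (n+1)}`, where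
`λ` is the Penrose splitting `λ(e_i) = e_j ⊗ e_k + e_k ⊗ e_j` for `{i,j,k} = {1,2,3}`
(colors are elements of `Fin 3 = ℤ/3`, so the two splittings of `i` are
`(i+1, i+2)` and `(i+2, i+1)`). -/
def treeStep (K : Type*) [Field K] {n : ℕ} (p : Fin n) : W K n →ₗ[K] W K (n + 1) :=
  (Pi.basisFun K (Fin n → Fin 3)).constr K fun c =>
    Pi.single (ins p c (c p + 1) (c p + 2)) 1 + Pi.single (ins p c (c p + 2) (c p + 1)) 1

/-- Descendant binary tree operators `V → V^{⊗ n}`: compositions of maps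
`id^{⊗ p} ⊗ λ ⊗ id^{⊗ q}` starting from `id_V`. -/
inductive IsTree (K : Type*) [Field K] : {n : ℕ} → (W K 1 →ₗ[K] W K n) → Prop
  | id : IsTree K LinearMap.id
  | step {n : ℕ} (p : Fin n) {g : W K 1 →ₗ[K] W K n} :
      IsTree K g → IsTree K (treeStep K p ∘ₗ g)

/-- The basis vector `e_i` of `V = W K 1`. -/
def eW (K : Type*) [Field K] (i : Fin 3) : W K 1 := Pi.single (fun _ => i) 1

/-- The inner product on `V^{⊗ n}` making the canonical tensor basis orthonormal. -/
def ip {K : Type*} [Field K] {n : ℕ} (f g : W K n) : K := ∑ c, f c * g c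

end


lemma gf4_key (φ : Fin 3 → GaloisField 2 2) (hinj : Function.Injective φ)
    (h0 : ∀ i, φ i ≠ 0) (x : Fin 3) : φ (x + 1) + φ (x + 2) = φ x := by
  classical
  have hd : ∀ u v : Fin 3, u ≠ v → φ u ≠ φ v := fun u v h => fun e => h (hinj e)
  have hne3 : ∀ y : Fin 3, y ≠ y + 1 ∧ y ≠ y + 2 ∧ y + 1 ≠ y + 2 := by decide
  set s := φ (x + 1) + φ (x + 2) with hs
  have hs0 : s ≠ 0 := by
    intro h
    have h2 : φ (x + 1) = -φ (x + 2) := eq_neg_of_add_eq_zero_left h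
    rw [CharTwo.neg_eq] at h2
    exact hd (x+1) (x+2) (hne3 x).2.2 h2
  have hs1 : s ≠ φ (x + 1) := by
    intro h
    apply h0 (x + 2)
    have : φ (x+1) + φ (x+2) = φ (x+1) + 0 := by rw [add_zero]; exact h
    exact add_left_cancel this
  have hs2 : s ≠ φ (x + 2) := by
    intro h
    apply h0 (x + 1)
    have : φ (x+2) + φ (x+1) = φ (x+2) + 0 := by rw [add_zero, add_comm]; exact h
    exact add_left_cancel this
  by_contra hne
  have d01 : φ x ≠ φ (x+1) := hd _ _ (hne3 x).1
  have d02 : φ x ≠ φ (x+2) := hd _ _ (hne3 x).2.1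
  have d12 : φ (x+1) ≠ φ (x+2) := hd _ _ (hne3 x).2.2
  haveI : Fintype (GaloisField 2 2) := Fintype.ofFinite _
  have hfc : Fintype.card (GaloisField 2 2) = 4 := by
    rw [← Nat.card_eq_fintype_card]; exact GaloisField.card 2 2 (by norm_num)
  have hnd : ({0, φ x, φ (x+1), φ (x+2), s} : Finset (GaloisField 2 2)).card = 5 := by
    rw [Finset.card_insert_of_notMem, Finset.card_insert_of_notMem,
      Finset.card_insert_of_notMem, Finset.card_insert_of_notMem, Finset.card_singleton]
    · simp only [Finset.mem_singleton]; exact fun h => hs2 h.symm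
    · simp only [Finset.mem_insert, Finset.mem_singleton]; push_neg
      exact ⟨d12, fun h => hs1 h.symm⟩
    · simp only [Finset.mem_insert, Finset.mem_singleton]; push_neg
      exact ⟨d01, d02, fun h => hne h.symm⟩
    · simp only [Finset.mem_insert, Finset.mem_singleton]; push_neg
      exact ⟨fun h => h0 x h.symm, fun h => h0 (x+1) h.symm, fun h => h0 (x+2) h.symm,
        fun h => hs0 h.symm⟩
  have hle := Finset.card_le_univ ({0, φ x, φ (x+1), φ (x+2), s} : Finset (GaloisField 2 2))
  rw [hnd, hfc] at hle
  omega


lemma ins_castSucc {n : ℕ} (p : Fin n) (c : Fin n → Fin 3) (a b : Fin 3) :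
    ins p c a b p.castSucc = a := by
  simp [ins]

lemma ins_succAbove {n : ℕ} (p : Fin n) (c : Fin n → Fin 3) (a b : Fin 3) (j : Fin n) :
    ins p c a b (p.castSucc.succAbove j) = Function.update c p b j := by
  rcases lt_or_ge j.val p.val with h | h
  · rw [Fin.succAbove_of_castSucc_lt _ _ (Fin.castSucc_lt_castSucc_iff.mpr (Fin.lt_def.mpr h))]
    rw [Function.update_of_ne (by intro e; rw [e] at h; omega)]
    simp only [ins, Fin.coe_castSucc]
    rw [dif_pos h]
  · rw [Fin.succAbove_of_le_castSucc _ _ (Fin.castSucc_le_castSucc_iff.mpr (Fin.le_def.mpr h))]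
    simp only [ins, Fin.val_succ]
    rw [dif_neg (by omega)]
    rcases eq_or_ne j p with rfl | hne
    · rw [dif_neg (by omega), dif_pos rfl, Function.update_self]
    · have hjp : p.val < j.val := by
        rcases lt_or_eq_of_le h with h' | h'
        · exact h'
        · exact absurd (Fin.ext h'.symm) hne
      rw [dif_neg (by omega), dif_neg (by omega), Function.update_of_ne hne]
      exact congrArg c (Fin.ext (by simp))

lemma sum_ins {M : Type*} [AddCommMonoid M] {n : ℕ} (f : Fin 3 → M) (p : Fin n)
    (c : Fin n → Fin 3) (a b : Fin 3) :
    ∑ q : Fin (n + 1), f (ins p c a b q)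
      = f a + f b + ∑ q ∈ Finset.univ.erase p, f (c q) := by
  rw [Fin.sum_univ_succAbove (fun q => f (ins p c a b q)) p.castSucc, ins_castSucc]
  simp only [ins_succAbove]
  rw [← Finset.add_sum_erase _ (fun j => f (Function.update c p b j)) (Finset.mem_univ p),
    Function.update_self, ← add_assoc]
  congr 1
  exact Finset.sum_congr rfl fun j hj =>
    congrArg f (Function.update_of_ne (Finset.ne_of_mem_erase hj) b c)

lemma treeStep_apply (K : Type*) [Field K] {n : ℕ} (p : Fin n) (v : W K n)
    (c : Fin (n + 1) → Fin 3) :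
    treeStep K p v c = ∑ c' : Fin n → Fin 3, v c' *
      ((if c = ins p c' (c' p + 1) (c' p + 2) then (1 : K) else 0) +
       (if c = ins p c' (c' p + 2) (c' p + 1) then (1 : K) else 0)) := by
  rw [treeStep, Module.Basis.constr_apply_fintype]
  simp [Pi.basisFun_equivFun, Finset.sum_apply, Pi.single_apply, mul_add]

/-- If the coefficient of `e_{c 1} ⊗ ⋯ ⊗ e_{c n}` in `g (e i)` is nonzero for a
descendant binary tree operator `g`, then under any identification `φ` of the three
colors with the three nonzero elements of `𝔽₄`, `φ i = ∑ q, φ (c q)`. -/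
theorem stmt13 (K : Type*) [Field K] [CharZero K]
    (φ : Fin 3 → GaloisField 2 2) (hinj : Function.Injective φ) (h0 : ∀ i, φ i ≠ 0)
    {n : ℕ} (g : W K 1 →ₗ[K] W K n) (hg : IsTree K g)
    (i : Fin 3) (c : Fin n → Fin 3) (hc : g (eW K i) c ≠ 0) :
    φ i = ∑ q, φ (c q) := by
  classical
  induction hg with
  | id =>
    have hc' : eW K i c ≠ 0 := hc
    rw [eW, Pi.single_apply] at hc'
    have hceq : c = fun _ => i := by
      by_contra hne
      rw [if_neg hne] at hc'
      exact hc' rfl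
    subst hceq
    simp
  | @step m p g' hg' ih =>
    rw [LinearMap.comp_apply, treeStep_apply] at hc
    obtain ⟨c', _, hterm⟩ := Finset.exists_ne_zero_of_sum_ne_zero hc
    have hv : g' (eW K i) c' ≠ 0 := by
      intro h; rw [h, zero_mul] at hterm; exact hterm rfl
    have hIH := ih c' hv
    have hcases : c = ins p c' (c' p + 1) (c' p + 2) ∨ c = ins p c' (c' p + 2) (c' p + 1) := by
      by_contra hor
      push_neg at hor
      rw [if_neg hor.1, if_neg hor.2, add_zero, mul_zero] at hterm
      exact hterm rfl
    have hkey := gf4_key φ hinj h0 (c' p)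
    have hsum : ∑ q, φ (c q) = ∑ q, φ (c' q) := by
      have hφsplit : ∑ q, φ (c' q)
          = φ (c' p) + ∑ q ∈ Finset.univ.erase p, φ (c' q) :=
        (Finset.add_sum_erase _ (fun q => φ (c' q)) (Finset.mem_univ p)).symm
      rcases hcases with rfl | rfl
      · rw [sum_ins (fun j => φ j) p c' (c' p + 1) (c' p + 2), hφsplit, hkey]
      · rw [sum_ins (fun j => φ j) p c' (c' p + 2) (c' p + 1), hφsplit, ← hkey, add_comm (φ (c' p + 2))]
    rw [hsum]
    exact hIH
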